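/- Let R be a commutative ring and ξ ∈ R a nilpotent element. Then the sequence of R[[z]]-modules 0 → R[[z]] → R[[z]] → R → 0, where the first map is multiplication by (z − ξ) and the second sends a power series f(z) to f(ξ) (well-defined since ξ is nilpotent), is exact. In particular z − ξ is a non-zero-divisor in R[[z]]. -/

import Mathlib

open PowerSeries

lemma stmt8_coeff_zero (R : Type*) [CommRing R] (ξ : R) (g : PowerSeries R) :
    PowerSeries.coeff 0 ((PowerSeries.X - PowerSeries.C ξ) * g)
      = -(ξ * PowerSeries.coeff 0 g) := by
  rw [sub_mul, map_sub, PowerSeries.coeff_zero_X_mul, PowerSeries.coeff_C_mul]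
  ring

lemma stmt8_coeff_succ (R : Type*) [CommRing R] (ξ : R) (g : PowerSeries R) (n : ℕ) :
    PowerSeries.coeff (n + 1) ((PowerSeries.X - PowerSeries.C ξ) * g)
      = PowerSeries.coeff n g - ξ * PowerSeries.coeff (n + 1) g := by
  rw [sub_mul, map_sub, PowerSeries.coeff_succ_X_mul, PowerSeries.coeff_C_mul]

/-- Let `R` be a commutative ring and `ξ ∈ R` nilpotent
(`ξ^N = 0`).  The sequence of `R[[z]]`-modules
`0 → R[[z]] → R[[z]] → R → 0`, where the first map is multiplication by
`z − ξ` and the second sends `f(z)` to `f(ξ)` (a finite sum since `ξ` is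
nilpotent), is exact.  In particular `z − ξ` is a non-zero-divisor in
`R[[z]]`. -/
theorem stmt8 (R : Type*) [CommRing R] (ξ : R) (N : ℕ) (hξ : ξ ^ N = 0)
    (ev : PowerSeries R → R)
    (hev : ∀ f, ev f = ∑ i ∈ Finset.range N, PowerSeries.coeff i f * ξ ^ i) :
    Function.Injective
      (fun f : PowerSeries R => (PowerSeries.X - PowerSeries.C ξ) * f) ∧
    Function.Surjective ev ∧
    ∀ f : PowerSeries R,
      ev f = 0 ↔ ∃ g, f = (PowerSeries.X - PowerSeries.C ξ) * g := by
  refine ⟨?_, ?_, ?_⟩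
  · -- injectivity
    intro a b h
    simp only at h
    have hd : (PowerSeries.X - PowerSeries.C ξ) * (a - b) = 0 := by
      rw [mul_sub, h, sub_self]
    have key : ∀ m, PowerSeries.coeff m (a - b)
        = ξ * PowerSeries.coeff (m + 1) (a - b) := by
      intro m
      have := congrArg (PowerSeries.coeff (m + 1)) hd
      rw [stmt8_coeff_succ, map_zero, sub_eq_zero] at this
      exact this
    have key2 : ∀ k m, PowerSeries.coeff m (a - b)
        = ξ ^ k * PowerSeries.coeff (m + k) (a - b) := by
      intro k
      induction k with
      | zero => intro m; simp
      | succ k ih =>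
          intro m
          rw [key m, ih (m + 1), pow_succ]
          ring_nf
    have : a - b = 0 := by
      ext m
      rw [map_zero, key2 N m, hξ, zero_mul]
    exact sub_eq_zero.mp this
  · -- surjectivity
    rcases Nat.eq_zero_or_pos N with rfl | hN
    · have h1 : (1 : R) = 0 := by simpa using hξ
      intro r
      refine ⟨0, ?_⟩
      have h2 : ev 0 = 0 := by rw [hev]; simp
      rw [h2]
      calc (0 : R) = r * 0 := by ring
        _ = r * 1 := by rw [h1]
        _ = r := by ring
    · intro r
      refine ⟨PowerSeries.C r, ?_⟩
      rw [hev, Finset.sum_eq_single 0]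
      · simp
      · intro i _ hi
        simp [PowerSeries.coeff_C, hi]
      · intro h; exact absurd (Finset.mem_range.mpr hN) h
  · -- exactness
    intro f
    constructor
    · intro h0
      refine ⟨PowerSeries.mk (fun n =>
        ∑ j ∈ Finset.range N, ξ ^ j * PowerSeries.coeff (n + 1 + j) f), ?_⟩
      ext n
      cases n with
      | zero =>
          rw [stmt8_coeff_zero, PowerSeries.coeff_mk]
          have h1 : ∑ i ∈ Finset.range (N + 1), PowerSeries.coeff i f * ξ ^ i = 0 := by
            rw [Finset.sum_range_succ, hξ, mul_zero, add_zero, ← hev f, h0]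
          rw [Finset.sum_range_succ'] at h1
          have h2 : ξ * ∑ j ∈ Finset.range N, ξ ^ j * PowerSeries.coeff (0 + 1 + j) f
              = ∑ j ∈ Finset.range N, PowerSeries.coeff (j + 1) f * ξ ^ (j + 1) := by
            rw [Finset.mul_sum]
            refine Finset.sum_congr rfl fun j _ => ?_
            have e : 0 + 1 + j = j + 1 := by omega
            rw [e, pow_succ]
            ring
          rw [h2]
          simp only [pow_zero, mul_one] at h1
          linear_combination h1
      | succ n =>
          rw [stmt8_coeff_succ, PowerSeries.coeff_mk, PowerSeries.coeff_mk]
          have h1 := Finset.sum_range_succ' (fun j => ξ ^ j * PowerSeries.coeff (n + 1 + j) f) N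
          have h2 := Finset.sum_range_succ (fun j => ξ ^ j * PowerSeries.coeff (n + 1 + j) f) N
          simp only [hξ, zero_mul, add_zero, pow_zero, one_mul, Nat.add_zero] at h1 h2
          have h3 : ξ * ∑ j ∈ Finset.range N, ξ ^ j * PowerSeries.coeff (n + 1 + 1 + j) f
              = ∑ j ∈ Finset.range N, ξ ^ (j + 1) * PowerSeries.coeff (n + 1 + (j + 1)) f := by
            rw [Finset.mul_sum]
            refine Finset.sum_congr rfl fun j _ => ?_
            have e : n + 1 + 1 + j = n + 1 + (j + 1) := by omega
            rw [e, pow_succ]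
            ring
          rw [h3]
          linear_combination h2 - h1
    · rintro ⟨g, rfl⟩
      rw [hev]
      have : ∀ i ∈ Finset.range N,
          PowerSeries.coeff i ((PowerSeries.X - PowerSeries.C ξ) * g) * ξ ^ i
          = (fun j => match j with
              | 0 => (0 : R)
              | Nat.succ m => ξ ^ (m + 1) * PowerSeries.coeff m g) i
            - (fun j => match j with
              | 0 => (0 : R)
              | Nat.succ m => ξ ^ (m + 1) * PowerSeries.coeff m g) (i + 1) := by
        intro i _
        cases i with
        | zero => rw [stmt8_coeff_zero]; simp
        | succ m => rw [stmt8_coeff_succ]; simp only [pow_succ]; ring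
      rw [Finset.sum_congr rfl this, Finset.sum_range_sub']
      cases N with
      | zero => simp
      | succ M => simp [hξ]
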